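/- In the strong well-linked decomposition of S with |out(S)| = z, for each i with 1 ≤ i ≤ 2⌊log z⌋, the number of sets R in the final partition with z/2^i < |out(R)| ≤ z/2^{i-1} is at most 2^{3i+3}. -/
import Mathlib


open scoped Classical

namespace VS

/-- A walk in a multigraph whose edges `E` have endpoints given by `ends`. -/
structure Walk (V : Type*) (E : Type*) (ends : E → Sym2 V) where
  n : ℕ
  vert : Fin (n + 1) → V
  edge : Fin n → E
  coh : ∀ i : Fin n, ends (edge i) = s(vert i.castSucc, vert i.succ)

namespace Walk

variable {V E : Type*} {ends : E → Sym2 V}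

def start (w : Walk V E ends) : V := w.vert 0

def finish (w : Walk V E ends) : V := w.vert (Fin.last w.n)

def uses (w : Walk V E ends) (f : E) : Prop := ∃ i, w.edge i = f

/-- Number of occurrences of the edge `f` on the walk. -/
noncomputable def mult (w : Walk V E ends) (f : E) : ℕ :=
  Nat.card {i : Fin w.n // w.edge i = f}

/-- The first edge of the walk, if any. -/
noncomputable def fe (w : Walk V E ends) : Option E :=
  if h : 0 < w.n then some (w.edge ⟨0, h⟩) else none

/-- The last edge of the walk, if any. -/
noncomputable def le (w : Walk V E ends) : Option E :=
  if h : 0 < w.n then some (w.edge ⟨w.n - 1, by omega⟩) else none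

/-- All edges of the walk other than the first and the last one have both
endpoints in `S` (i.e. the walk is contained in `S`). -/
def InternalIn (w : Walk V E ends) (S : Set V) : Prop :=
  ∀ i : Fin w.n, (i : ℕ) ≠ 0 → (i : ℕ) + 1 ≠ w.n → ∀ x ∈ ends (w.edge i), x ∈ S

end Walk

variable {V V' E : Type*}

/-- `e` has exactly one endpoint in `S`, i.e. `e ∈ out(S)`. -/
def Out (ends : E → Sym2 V) (S : Set V) (e : E) : Prop :=
  ∃ u v, ends e = s(u, v) ∧ u ∈ S ∧ v ∉ S

/-- `e` has one endpoint in `A` and the other one in `B`. -/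
def Crosses (ends : E → Sym2 V) (A B : Set V) (e : E) : Prop :=
  ∃ u v, ends e = s(u, v) ∧ u ∈ A ∧ v ∈ B

noncomputable def outCard (ends : E → Sym2 V) (S : Set V) : ℕ :=
  Nat.card {e : E // Out ends S e}

noncomputable def crossCard (ends : E → Sym2 V) (A B : Set V) : ℕ :=
  Nat.card {e : E // Crosses ends A B e}

/-- Value of the minimum edge cut separating `TA` from `TB` (unit capacities). -/
noncomputable def minCut (ends : E → Sym2 V) (TA TB : Set V) : ℕ :=
  sInf { n : ℕ | ∃ A : Set V, TA ⊆ A ∧ Disjoint A TB ∧ n = outCard ends A }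

/-- `R` is `α`-well-linked: for every partition `(A, B)` of `R`,
`|E(A,B)| ≥ α · min (|out R ∩ out A|) (|out R ∩ out B|)`. -/
def WellLinked (ends : E → Sym2 V) (α : ℝ) (R : Set V) : Prop :=
  ∀ A B : Set V, A ∪ B = R → Disjoint A B →
    α * min (Nat.card {e : E // Out ends R e ∧ Out ends A e} : ℝ)
        (Nat.card {e : E // Out ends R e ∧ Out ends B e}) ≤ crossCard ends A B

/-- `R` is `α`-well-linked for the edge set `E' ⊆ out(R)`. -/
def WellLinkedFor (ends : E → Sym2 V) (α : ℝ) (R : Set V) (E' : Set E) : Prop :=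
  ∀ A B : Set V, A ∪ B = R → Disjoint A B →
    α * min (Nat.card {e : E // e ∈ E' ∧ Out ends A e} : ℝ)
        (Nat.card {e : E // e ∈ E' ∧ Out ends B e}) ≤ crossCard ends A B

/-- `φ : V → V'` is the quotient map contracting exactly the clusters of `𝒞`. -/
def IsContraction (φ : V → V') (𝒞 : Set (Set V)) : Prop :=
  (∀ S ∈ 𝒞, ∀ u ∈ S, ∀ v ∈ S, φ u = φ v) ∧
  (∀ u v : V, φ u = φ v → u = v ∨ ∃ S ∈ 𝒞, u ∈ S ∧ v ∈ S)

/-- Amount of flow that the path-flow `F` routes between the vertices `x` and `y`. -/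
noncomputable def routed {ends : E → Sym2 V} (F : List (Walk V E ends × ℝ)) (x y : V) : ℝ :=
  (F.map (fun p => if s(p.1.start, p.1.finish) = s(x, y) then p.2 else 0)).sum

/-- Amount of flow that the path-flow `F` routes between the edges `e` and `e'`. -/
noncomputable def routedE {ends : E → Sym2 V} (F : List (Walk V E ends × ℝ)) (e e' : E) : ℝ :=
  (F.map (fun p =>
    if (p.1.fe = some e ∧ p.1.le = some e') ∨ (p.1.fe = some e' ∧ p.1.le = some e)
    then p.2 else 0)).sum

/-- Total flow of the path-flow `F` through the edge `f` (congestion at `f`,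
for unit capacities). -/
noncomputable def congAt {ends : E → Sym2 V} (F : List (Walk V E ends × ℝ)) (f : E) : ℝ :=
  (F.map (fun p => p.2 * (p.1.mult f : ℝ))).sum

/-- All weights of the path-flow are nonnegative. -/
def NonnegWt {ends : E → Sym2 V} (F : List (Walk V E ends × ℝ)) : Prop := ∀ p ∈ F, 0 ≤ p.2

/-- One step of the strong well-linked decomposition: some set `R` of the current
partition is replaced by a partition `(A, B)` of sparsity less than `1/3`. -/
def StrongStep {V E : Type*} [Fintype E] [DecidableEq V] (ends : E → Sym2 V)
    (W W' : Finset (Finset V)) : Prop :=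
  ∃ R ∈ W, ∃ A B : Finset V, A.Nonempty ∧ B.Nonempty ∧ Disjoint A B ∧ A ∪ B = R ∧
    3 * crossCard ends ↑A ↑B <
      min (Nat.card {e : E // Out ends ↑R e ∧ Out ends ↑A e})
          (Nat.card {e : E // Out ends ↑R e ∧ Out ends ↑B e}) ∧
    W' = insert A (insert B (W.erase R))

section Aux

private lemma crosses_comm (ends : E → Sym2 V) (A B : Set V) (e : E) :
    Crosses ends A B e ↔ Crosses ends B A e := by
  constructor <;> rintro ⟨u, v, h, hu, hv⟩ <;>
    exact ⟨v, u, by rw [h, Sym2.eq_swap], hv, hu⟩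

private lemma out_iff_mem (ends : E → Sym2 V) {A R : Set V} (hAR : A ⊆ R) {e : E} {u v : V}
    (h : ends e = s(u, v)) (hu : u ∈ R) (hv : v ∉ R) : Out ends A e ↔ u ∈ A := by
  constructor
  · rintro ⟨x, y, hxy, hx, hy⟩
    rw [h] at hxy
    rcases Sym2.eq_iff.mp hxy with ⟨rfl, rfl⟩ | ⟨rfl, rfl⟩
    · exact hx
    · exact absurd (hAR hx) hv
  · intro hA
    exact ⟨u, v, h, hA, fun hvA => hv (hAR hvA)⟩

private lemma out_decomp [Fintype E] (ends : E → Sym2 V) {A B R : Set V}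
    (hU : A ∪ B = R) (hD : Disjoint A B) :
    outCard ends A = Nat.card {e : E // Out ends R e ∧ Out ends A e} + crossCard ends A B := by
  have hAR : A ⊆ R := hU ▸ Set.subset_union_left
  have hBR : B ⊆ R := hU ▸ Set.subset_union_right
  have hiff : ∀ e : E, Out ends A e ↔ ((Out ends R e ∧ Out ends A e) ∨ Crosses ends A B e) := by
    intro e
    constructor
    · rintro hOA
      obtain ⟨x, y, h, hx, hy⟩ := hOA
      by_cases hyR : y ∈ R
      · have hyB : y ∈ B := by
          rcases (hU ▸ hyR : y ∈ A ∪ B) with h' | h'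
          · exact absurd h' hy
          · exact h'
        exact Or.inr ⟨x, y, h, hx, hyB⟩
      · exact Or.inl ⟨⟨x, y, h, hAR hx, hyR⟩, ⟨x, y, h, hx, hy⟩⟩
    · rintro (⟨_, hOA⟩ | ⟨x, y, h, hx, hy⟩)
      · exact hOA
      · exact ⟨x, y, h, hx, fun hyA => (Set.disjoint_left.mp hD hyA) hy⟩
  have hdisj : Disjoint (fun e : E => Out ends R e ∧ Out ends A e) (Crosses ends A B) := by
    intro p h1 h2 e he
    obtain ⟨⟨u, v, h, hu, hv⟩, _⟩ := h1 e he
    obtain ⟨x, y, hxy, hx, hy⟩ := h2 e he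
    rw [h] at hxy
    rcases Sym2.eq_iff.mp hxy with ⟨rfl, rfl⟩ | ⟨rfl, rfl⟩
    · exact hv (hBR hy)
    · exact hv (hAR hx)
  calc outCard ends A
      = Nat.card {e : E // (Out ends R e ∧ Out ends A e) ∨ Crosses ends A B e} :=
        Nat.card_congr (Equiv.subtypeEquivRight hiff)
    _ = _ := by
        simp only [crossCard, Nat.card_eq_fintype_card]
        exact Fintype.card_subtype_or_disjoint _ _ hdisj

private lemma out_split [Fintype E] (ends : E → Sym2 V) {A B R : Set V}
    (hU : A ∪ B = R) (hD : Disjoint A B) :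
    Nat.card {e : E // Out ends R e ∧ Out ends A e} +
      Nat.card {e : E // Out ends R e ∧ Out ends B e} = outCard ends R := by
  have hAR : A ⊆ R := hU ▸ Set.subset_union_left
  have hBR : B ⊆ R := hU ▸ Set.subset_union_right
  have hiff : ∀ e : E, Out ends R e ↔
      ((Out ends R e ∧ Out ends A e) ∨ (Out ends R e ∧ Out ends B e)) := by
    intro e
    constructor
    · rintro hOR
      obtain ⟨u, v, h, hu, hv⟩ := hOR
      rcases (hU ▸ hu : u ∈ A ∪ B) with h' | h'
      · exact Or.inl ⟨⟨u, v, h, hu, hv⟩, (out_iff_mem ends hAR h hu hv).mpr h'⟩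
      · exact Or.inr ⟨⟨u, v, h, hu, hv⟩, (out_iff_mem ends hBR h hu hv).mpr h'⟩
    · rintro (⟨h', _⟩ | ⟨h', _⟩) <;> exact h'
  have hdisj : Disjoint (fun e : E => Out ends R e ∧ Out ends A e)
      (fun e : E => Out ends R e ∧ Out ends B e) := by
    intro p h1 h2 e he
    obtain ⟨⟨u, v, h, hu, hv⟩, hOA⟩ := h1 e he
    obtain ⟨_, hOB⟩ := h2 e he
    exact Set.disjoint_left.mp hD ((out_iff_mem ends hAR h hu hv).mp hOA)
      ((out_iff_mem ends hBR h hu hv).mp hOB)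
  calc Nat.card {e : E // Out ends R e ∧ Out ends A e} +
        Nat.card {e : E // Out ends R e ∧ Out ends B e}
      = Nat.card {e : E // (Out ends R e ∧ Out ends A e) ∨ (Out ends R e ∧ Out ends B e)} := by
        simp only [Nat.card_eq_fintype_card]
        exact (Fintype.card_subtype_or_disjoint _ _ hdisj).symm
    _ = outCard ends R := (Nat.card_congr (Equiv.subtypeEquivRight hiff)).symm

private lemma key_split [Fintype E] (ends : E → Sym2 V) {A B R : Set V}
    (hU : A ∪ B = R) (hD : Disjoint A B)
    (h3 : 3 * crossCard ends A B <
      min (Nat.card {e : E // Out ends R e ∧ Out ends A e})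
          (Nat.card {e : E // Out ends R e ∧ Out ends B e})) :
    outCard ends A ^ 2 + outCard ends B ^ 2 ≤ outCard ends R ^ 2 := by
  set a := Nat.card {e : E // Out ends R e ∧ Out ends A e} with ha
  set b := Nat.card {e : E // Out ends R e ∧ Out ends B e} with hb
  set c := crossCard ends A B with hc
  have hA' : outCard ends A = a + c := out_decomp ends hU hD
  have hB' : outCard ends B = b + c := by
    have hU' : B ∪ A = R := by rw [Set.union_comm]; exact hU
    have hcc : crossCard ends B A = crossCard ends A B :=
      Nat.card_congr (Equiv.subtypeEquivRight fun e => crosses_comm ends B A e)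
    rw [out_decomp ends hU' hD.symm, hcc]
  have hR' : a + b = outCard ends R := out_split ends hU hD
  have h3a : 3 * c < a := lt_of_lt_of_le h3 (min_le_left _ _)
  have h3b : 3 * c < b := lt_of_lt_of_le h3 (min_le_right _ _)
  rw [hA', hB', ← hR']
  nlinarith

private lemma sum_insert_le' {α : Type*} [DecidableEq α] (s : Finset α) (f : α → ℕ) (a : α) :
    ∑ x ∈ insert a s, f x ≤ f a + ∑ x ∈ s, f x := by
  by_cases h : a ∈ s
  · rw [Finset.insert_eq_self.2 h]; exact Nat.le_add_left _ _
  · rw [Finset.sum_insert h]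

private lemma phi_step [Fintype E] [DecidableEq V] (ends : E → Sym2 V)
    {W W' : Finset (Finset V)} (h : StrongStep ends W W') :
    ∑ R ∈ W', outCard ends (↑R : Set V) ^ 2 ≤ ∑ R ∈ W, outCard ends (↑R : Set V) ^ 2 := by
  obtain ⟨R, hR, A, B, _, _, hD, hU, hlt, rfl⟩ := h
  have hUs : (↑A : Set V) ∪ ↑B = ↑R := by rw [← Finset.coe_union, hU]
  have hDs : Disjoint (↑A : Set V) (↑B : Set V) := Finset.disjoint_coe.mpr hD
  have key := key_split ends hUs hDs hlt
  set f : Finset V → ℕ := fun R => outCard ends (↑R : Set V) ^ 2 with hf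
  calc ∑ x ∈ insert A (insert B (W.erase R)), f x
      ≤ f A + ∑ x ∈ insert B (W.erase R), f x := sum_insert_le' _ _ _
    _ ≤ f A + (f B + ∑ x ∈ W.erase R, f x) := by
        exact Nat.add_le_add_left (sum_insert_le' _ _ _) _
    _ ≤ f R + ∑ x ∈ W.erase R, f x := by
        have : f A + f B ≤ f R := key
        omega
    _ = ∑ x ∈ W, f x := Finset.add_sum_erase W f hR

end Aux

/-- In the strong well-linked decomposition of `S` (`z = |out(S)|`),
for every `1 ≤ i ≤ 2⌊log z⌋`, the number of sets `R` of the final partition with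
`z/2^i < |out(R)| ≤ z/2^{i-1}` is at most `2^{3i+3}`. -/
theorem stmt14 {V E : Type*} [Fintype V] [Fintype E] [DecidableEq V] (ends : E → Sym2 V)
    (S : Finset V) (z : ℕ) (hz : z = outCard ends ↑S) (hz2 : 2 ≤ z)
    (W : Finset (Finset V))
    (hreach : Relation.ReflTransGen (StrongStep ends) {S} W)
    (i : ℕ) (hi1 : 1 ≤ i) (hi2 : i ≤ 2 * Nat.log 2 z) :
    (W.filter (fun R => (z : ℝ) / 2 ^ i < (outCard ends ↑R : ℝ) ∧
        (outCard ends ↑R : ℝ) ≤ (z : ℝ) / 2 ^ (i - 1))).card ≤ 2 ^ (3 * i + 3) := by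
  classical
  have hPhi : ∑ R ∈ W, outCard ends (↑R : Set V) ^ 2 ≤ z ^ 2 := by
    induction hreach with
    | refl => simp [hz]
    | tail _ h2 ih => exact le_trans (phi_step ends h2) ih
  have hz0 : (0 : ℝ) < (z : ℝ) := by exact_mod_cast (by omega : 0 < z)
  have hpos : (0 : ℝ) < (z : ℝ) / 2 ^ i := by positivity
  set T := W.filter (fun R : Finset V => (z : ℝ) / 2 ^ i < (outCard ends (↑R : Set V) : ℝ) ∧
      (outCard ends (↑R : Set V) : ℝ) ≤ (z : ℝ) / 2 ^ (i - 1)) with hT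
  have h1 : ∀ R ∈ T, ((z : ℝ) / 2 ^ i) ^ 2 ≤ ((outCard ends (↑R : Set V) : ℝ)) ^ 2 := by
    intro R hRT
    have := (Finset.mem_filter.mp hRT).2.1
    exact pow_le_pow_left₀ hpos.le this.le 2
  have h2 := Finset.card_nsmul_le_sum T
    (fun R => ((outCard ends (↑R : Set V) : ℝ)) ^ 2) (((z : ℝ) / 2 ^ i) ^ 2) h1
  have h3 : ∑ R ∈ T, ((outCard ends (↑R : Set V) : ℝ)) ^ 2
      ≤ ∑ R ∈ W, ((outCard ends (↑R : Set V) : ℝ)) ^ 2 := by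
    have hsub : T ⊆ W := by rw [hT]; exact Finset.filter_subset _ _
    have hnn : ∀ x ∈ W, x ∉ T → (0:ℝ) ≤ ((outCard ends (↑x : Set V) : ℝ)) ^ 2 := by
      intro x _ _; positivity
    exact Finset.sum_le_sum_of_subset_of_nonneg hsub hnn
  have h4 : ∑ R ∈ W, ((outCard ends (↑R : Set V) : ℝ)) ^ 2 ≤ (z : ℝ) ^ 2 := by
    exact_mod_cast hPhi
  have h5 : (T.card : ℝ) * ((z : ℝ) / 2 ^ i) ^ 2 ≤ (z : ℝ) ^ 2 := by
    calc (T.card : ℝ) * ((z : ℝ) / 2 ^ i) ^ 2 = T.card • ((z : ℝ) / 2 ^ i) ^ 2 := by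
          rw [nsmul_eq_mul]
      _ ≤ _ := le_trans h2 (le_trans h3 h4)
  have h6 : (T.card : ℝ) ≤ (z : ℝ) ^ 2 / ((z : ℝ) / 2 ^ i) ^ 2 :=
    (le_div_iff₀ (by positivity)).mpr h5
  have h7 : (z : ℝ) ^ 2 / ((z : ℝ) / 2 ^ i) ^ 2 = (2 : ℝ) ^ (2 * i) := by
    have hz' : (z : ℝ) ≠ 0 := ne_of_gt hz0
    have h2i : ((2 : ℝ) ^ i) ≠ 0 := by positivity
    field_simp
    ring
  have h8 : T.card ≤ 2 ^ (2 * i) := by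
    have := h6.trans_eq h7
    exact_mod_cast this
  have hsurj : Set.SurjOn (fun R : Finset V => (↑R : Set V)) ↑T
      ↑(Finset.filter (fun R : Set V => (z : ℝ) / 2 ^ i < (outCard ends R : ℝ) ∧
          (outCard ends R : ℝ) ≤ (z : ℝ) / 2 ^ (i - 1))
        (do let a ← W; pure ((↑a : Set V)))) := by
    intro x hx
    simp only [Finset.coe_filter, Set.mem_setOf_eq, Finset.mem_coe] at hx
    obtain ⟨hxW, hpx⟩ := hx
    have hex : ∃ a ∈ W, (↑a : Set V) = x := by
      simpa [Bind.bind, Pure.pure, Finset.mem_biUnion] using hxW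
    obtain ⟨a, haW, hax⟩ := hex
    refine ⟨a, ?_, hax⟩
    rw [Finset.mem_coe, hT, Finset.mem_filter]
    refine ⟨haW, ?_⟩
    rw [hax]
    exact hpx
  have hfinal := Finset.card_le_card_of_surjOn _ hsurj
  exact le_trans hfinal
    (h8.trans (Nat.pow_le_pow_right (by norm_num) (by omega : 2 * i ≤ 3 * i + 3)))

end VS
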